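/- Let q be an odd prime power with q ≡ ±1 (mod 10), fix β, γ ∈ GF(q^2) with β^{q+1} = −4/5 and γ^{q+1} = −1/5, and let P = {(βx², γx³, 1) : x ∈ GF(q^2), x^{q+1} = 1}. Then P is a set of q+1 singular points of the quadratic form Q(x,y,a) = x^{q+1} + y^{q+1} + a² on GF(q^2) ⊕ GF(q^2) ⊕ GF(q); that is, |P| = q+1 and Q(v) = 0 for every v ∈ P. -/

import Mathlib

/-- The Penttila–Mondello set `P = {(βx², γx³, 1) : x^{q+1} = 1}` (where
`β^{q+1} = −4/5`, `γ^{q+1} = −1/5`, `q ≡ ±1 (mod 10)`) consists of `q+1`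
singular points of the quadratic form `Q(x,y,a) = x^{q+1} + y^{q+1} + a²`. -/
theorem penttila_mondello_blt_points
    (q : ℕ) (hq : Odd q) (hq10 : q % 10 = 1 ∨ q % 10 = 9)
    (F K : Type*) [Field F] [Field K] [Fintype F] [Fintype K] [Algebra F K]
    (hF : Fintype.card F = q) (hK : Fintype.card K = q ^ 2)
    (Q : K × K × F → K)
    (hQ : ∀ v : K × K × F,
      Q v = v.1 ^ (q + 1) + v.2.1 ^ (q + 1) + (algebraMap F K v.2.2) ^ 2)
    (β γ : K) (hβ : β ^ (q + 1) = -(4 / 5 : K)) (hγ : γ ^ (q + 1) = -(1 / 5 : K))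
    (P : Set (K × K × F))
    (hP : P = {v | ∃ x : K, x ^ (q + 1) = 1 ∧ v = (β * x ^ 2, γ * x ^ 3, 1)}) :
    P.ncard = q + 1 ∧ ∀ v ∈ P, Q v = 0 := by
  classical
  have hq1 : 1 ≤ q := by rcases hq10 with h | h <;> omega
  have hq2 : 2 ≤ q := by
    have h1 : 1 < q ^ 2 := hK ▸ Fintype.one_lt_card
    by_contra h
    have hq1' : q = 1 := by omega
    rw [hq1'] at h1
    norm_num at h1
  -- primes vanishing in K divide q
  have haux : ∀ p : ℕ, p.Prime → (p : K) = 0 → p ∣ q := by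
    intro p hp hp0
    have hchar : ringChar K ∣ p := (ringChar.spec K p).mp (by exact_mod_cast hp0)
    obtain ⟨n, hcp, hcard⟩ := FiniteField.card K (ringChar K)
    have hpc : ringChar K = p := ((Nat.prime_dvd_prime_iff_eq hcp hp).mp hchar)
    rw [hpc] at hcard
    have : p ∣ q ^ 2 := hK ▸ hcard ▸ dvd_pow_self p n.pos.ne'
    exact hp.dvd_of_dvd_pow this
  have h5 : (5 : K) ≠ 0 := by
    intro h
    have := haux 5 (by norm_num) h
    omega
  have h2 : (2 : K) ≠ 0 := by
    intro h
    have := haux 2 (by norm_num) h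
    rcases hq with ⟨k, hk⟩
    omega
  have h4 : (4 : K) ≠ 0 := by
    intro h
    have h22 : (2 : K) * 2 = 4 := by norm_num
    rcases mul_eq_zero.mp (h22.trans h) with h' | h' <;> exact h2 h'
  have hβ0 : β ≠ 0 := by
    intro h
    rw [h, zero_pow (by omega : q + 1 ≠ 0)] at hβ
    rcases div_eq_zero_iff.mp (neg_eq_zero.mp hβ.symm) with h' | h'
    · exact h4 h'
    · exact h5 h'
  have hγ0 : γ ≠ 0 := by
    intro h
    rw [h, zero_pow (by omega : q + 1 ≠ 0)] at hγ
    rcases div_eq_zero_iff.mp (neg_eq_zero.mp hγ.symm) with h' | h'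
    · exact one_ne_zero h'
    · exact h5 h'
  -- the set of (q+1)-th roots of unity
  set T : Set K := {x : K | x ^ (q + 1) = 1} with hT
  -- there is a primitive (q+1)-th root of unity in K
  obtain ⟨g, hg⟩ := IsCyclic.exists_ofOrder_eq_natCard (α := Kˣ)
  have hcardu : Nat.card Kˣ = q ^ 2 - 1 := by
    rw [Nat.card_eq_fintype_card, Fintype.card_units, hK]
  have key : (q - 1) * (q + 1) = q ^ 2 - 1 := by
    obtain ⟨m, hm⟩ : ∃ m, q = m + 1 := ⟨q - 1, by omega⟩
    subst hm
    simp only [Nat.add_sub_cancel]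
    have e : (m + 1) ^ 2 = m * (m + 1 + 1) + 1 := by ring
    omega
  have horder : orderOf (g ^ (q - 1)) = q + 1 := by
    rw [orderOf_pow, hg, hcardu]
    have hdvd : q - 1 ∣ q ^ 2 - 1 := ⟨q + 1, key.symm⟩
    rw [Nat.gcd_eq_right hdvd, ← key,
      Nat.mul_div_cancel_left _ (by omega : 0 < q - 1)]
  have hprim : IsPrimitiveRoot ((g ^ (q - 1) : Kˣ) : K) (q + 1) := by
    rw [IsPrimitiveRoot.coe_units_iff]
    exact horder ▸ IsPrimitiveRoot.orderOf _
  have hTfin : T = ↑(Polynomial.nthRootsFinset (q + 1) (1 : K)) := by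
    ext x
    simp [hT, Polynomial.mem_nthRootsFinset (by omega : 0 < q + 1) (1 : K)]
  have hTcard : T.ncard = q + 1 := by
    rw [hTfin, Set.ncard_coe_finset, hprim.card_nthRootsFinset]
  -- the map
  set f : K → K × K × F := fun x => (β * x ^ 2, γ * x ^ 3, 1) with hf
  have hPT : P = f '' T := by
    rw [hP]
    ext v
    simp only [Set.mem_setOf_eq, Set.mem_image, hf, hT]
    constructor
    · rintro ⟨x, h1, h2⟩; exact ⟨x, h1, h2.symm⟩
    · rintro ⟨x, h1, h2⟩; exact ⟨x, h1, h2.symm⟩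
  have hinj : Set.InjOn f T := by
    intro x hx y hy hxy
    simp only [hf, Prod.mk.injEq] at hxy
    obtain ⟨e2, e3, -⟩ := hxy
    have hx' : x ^ (q + 1) = 1 := hx
    have hx0 : x ≠ 0 := by
      intro h; rw [h, zero_pow (by omega : q + 1 ≠ 0)] at hx'
      exact zero_ne_one hx'
    have hx2 : x ^ 2 = y ^ 2 := mul_left_cancel₀ hβ0 e2
    have hx3 : x ^ 3 = y ^ 3 := mul_left_cancel₀ hγ0 e3
    have hx20 : x ^ 2 ≠ 0 := pow_ne_zero 2 hx0
    have hxy2 : x * x ^ 2 = y * x ^ 2 := by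
      calc x * x ^ 2 = x ^ 3 := by ring
        _ = y ^ 3 := hx3
        _ = y * y ^ 2 := by ring
        _ = y * x ^ 2 := by rw [hx2]
    exact mul_right_cancel₀ hx20 hxy2
  constructor
  · rw [hPT, Set.ncard_image_of_injOn hinj, hTcard]
  · intro v hv
    rw [hPT] at hv
    obtain ⟨x, hx, rfl⟩ := hv
    rw [hQ]
    simp only [hf, map_one, one_pow]
    have e1 : (β * x ^ 2) ^ (q + 1) = β ^ (q + 1) * (x ^ (q + 1)) ^ 2 := by
      rw [mul_pow, ← pow_mul, ← pow_mul, Nat.mul_comm]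
    have e2 : (γ * x ^ 3) ^ (q + 1) = γ ^ (q + 1) * (x ^ (q + 1)) ^ 3 := by
      rw [mul_pow, ← pow_mul, ← pow_mul, Nat.mul_comm]
    rw [e1, e2, hx, hβ, hγ]
    field_simp
    norm_num
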